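/- Let I be a good ideal in K[x_1,…,x_n] with n ≥ 4. Then for every k ≥ 2, the power I^k is a bad ideal, i.e. I^k is not good with respect to its own boxes. -/

import Mathlib

open MvPolynomial

namespace GasanovaRR

/-- The monomial `x^α` in `K[x_1,…,x_n]`. -/
noncomputable def mono (K : Type*) [Field K] {n : ℕ} (α : Fin n → ℕ) :
    MvPolynomial (Fin n) K :=
  MvPolynomial.monomial (Finsupp.equivFunOnFinite.symm α) 1

/-- `I` is a monomial ideal: it is generated by a set of monomials. -/
def IsMonomialIdeal {K : Type*} [Field K] {n : ℕ}
    (I : Ideal (MvPolynomial (Fin n) K)) : Prop :=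
  ∃ A : Set (Fin n → ℕ), I = Ideal.span (mono K '' A)

/-- `x^α` is a minimal monomial generator of `I`, i.e. `x^α ∈ G(I)`:
`x^α ∈ I` and no monomial in `I` strictly divides it. -/
def IsMinGen {K : Type*} [Field K] {n : ℕ}
    (I : Ideal (MvPolynomial (Fin n) K)) (α : Fin n → ℕ) : Prop :=
  mono K α ∈ I ∧ ∀ β : Fin n → ℕ, mono K β ∈ I → β ≤ α → β = α

/-- The point `α` lies in the box `B_{a_1,…,a_n}` (for box sizes `d_1,…,d_n`). -/
def InBox {n : ℕ} (d a α : Fin n → ℕ) : Prop :=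
  ∀ i, a i * d i ≤ α i ∧ α i ≤ (a i + 1) * d i

/-- `I` is a good ideal (w.r.t. box sizes `d`): for every `l ≥ 1`, every minimal
generator of `I^l` lies in a box whose coordinate sum is `l - 1`. -/
def IsGood {K : Type*} [Field K] {n : ℕ}
    (I : Ideal (MvPolynomial (Fin n) K)) (d : Fin n → ℕ) : Prop :=
  ∀ l : ℕ, 1 ≤ l → ∀ α : Fin n → ℕ, IsMinGen (I ^ l) α →
    ∃ a : Fin n → ℕ, InBox d a α ∧ ∑ i, a i = l - 1

/-- `I` is an `𝔪`-primary monomial ideal whose minimal generating set contains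
`μ_i = x_i^{d_i}` with `d_i > 0` for each `i`. -/
def MPrimaryWithCorners {K : Type*} [Field K] {n : ℕ}
    (I : Ideal (MvPolynomial (Fin n) K)) (d : Fin n → ℕ) : Prop :=
  IsMonomialIdeal I ∧ I ≠ ⊤ ∧ (∀ i, 0 < d i) ∧ ∀ i, IsMinGen I (Pi.single i (d i))

/-- The ideal `I_{a_1,…,a_n}` associated to the box `B_{a_1,…,a_n}`, generated by
`m / (μ_1^{a_1}⋯μ_n^{a_n})` for `m ∈ B_{a_1,…,a_n} ∩ G(I^l)`, `l = a_1+⋯+a_n+1`. -/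
noncomputable def boxIdeal {K : Type*} [Field K] {n : ℕ}
    (I : Ideal (MvPolynomial (Fin n) K)) (d a : Fin n → ℕ) :
    Ideal (MvPolynomial (Fin n) K) :=
  Ideal.span ((fun α => mono K (α - fun i => a i * d i)) ''
    {α | InBox d a α ∧ IsMinGen (I ^ (∑ i, a i + 1)) α})

/-- The Ratliff–Rush closure `Ĩ = ⋃_{k ≥ 0} (I^{k+1} : I^k)`. -/
noncomputable def ratliffRush {K : Type*} [Field K] {n : ℕ}
    (I : Ideal (MvPolynomial (Fin n) K)) : Ideal (MvPolynomial (Fin n) K) :=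
  ⨆ k : ℕ, (I ^ (k + 1)).colon ((I ^ k : Ideal (MvPolynomial (Fin n) K)) : Set (MvPolynomial (Fin n) K))

/-- The cone in `ℕ^n` with set `S` of fixed coordinates and vertex `v`. -/
def Cone {n : ℕ} (S : Set (Fin n)) (v : Fin n → ℕ) : Set (Fin n → ℕ) :=
  {b | (∀ i ∈ S, b i = v i) ∧ ∀ i ∉ S, v i ≤ b i}

/-- `I` is a very good ideal: it is good and `I_{a_1,…,a_n} = I` for all boxes. -/
def IsVeryGood {K : Type*} [Field K] {n : ℕ}
    (I : Ideal (MvPolynomial (Fin n) K)) (d : Fin n → ℕ) : Prop :=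
  IsGood I d ∧ ∀ a : Fin n → ℕ, boxIdeal I d a = I


lemma mono_mul {K : Type*} [Field K] {n : ℕ} (α β : Fin n → ℕ) :
    mono K α * mono K β = mono K (α + β) := by
  have h : Finsupp.equivFunOnFinite.symm (α + β)
      = Finsupp.equivFunOnFinite.symm α + Finsupp.equivFunOnFinite.symm β := by
    ext i; simp
  simp only [mono, monomial_mul, mul_one, h]

lemma mono_zero {K : Type*} [Field K] {n : ℕ} : mono K (0 : Fin n → ℕ) = 1 := by
  have h : (Finsupp.equivFunOnFinite.symm (0 : Fin n → ℕ)) = 0 := by ext i; simp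
  simp [mono, h]

lemma mono_pow {K : Type*} [Field K] {n : ℕ} (α : Fin n → ℕ) (e : ℕ) :
    (mono K α) ^ e = mono K (e • α) := by
  induction e with
  | zero => simp [mono_zero]
  | succ e ih => rw [pow_succ, ih, mono_mul, succ_nsmul]

lemma mono_prod {K : Type*} [Field K] {n : ℕ} (s : Finset (Fin n)) (f : Fin n → (Fin n → ℕ)) :
    ∏ i ∈ s, mono K (f i) = mono K (∑ i ∈ s, f i) := by
  classical
  induction s using Finset.induction with
  | empty => simp [mono_zero]
  | insert a s h ih => rw [Finset.prod_insert h, Finset.sum_insert h, ih, mono_mul]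

lemma mem_pow_sum {K : Type*} [Field K] {n : ℕ} (I : Ideal (MvPolynomial (Fin n) K))
    (d a : Fin n → ℕ) (h : ∀ i, mono K (Pi.single i (d i)) ∈ I) :
    mono K (fun j => a j * d j) ∈ I ^ (∑ i, a i) := by
  have key : (fun j => a j * d j) = ∑ i, a i • Pi.single i (d i) := by
    funext j
    simp only [Finset.sum_apply, Pi.smul_apply, Pi.single_apply, smul_eq_mul]
    rw [Finset.sum_eq_single j]
    · simp
    · intro b _ hb; simp [Ne.symm hb]
    · simp
  rw [key, ← mono_prod, ← Finset.prod_pow_eq_pow_sum]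
  · exact Ideal.prod_mem_prod (fun i _ => by
      rw [← mono_pow]
      exact Ideal.pow_mem_pow (h i) (a i))

lemma exists_minGen_le {K : Type*} [Field K] {n : ℕ} (J : Ideal (MvPolynomial (Fin n) K))
    (γ : Fin n → ℕ) (h : mono K γ ∈ J) : ∃ α, α ≤ γ ∧ IsMinGen J α := by
  classical
  have hex : ∃ s : ℕ, ∃ β : Fin n → ℕ, mono K β ∈ J ∧ β ≤ γ ∧ ∑ i, β i = s :=
    ⟨∑ i, γ i, γ, h, le_refl _, rfl⟩
  obtain ⟨α, hαJ, hαγ, hsum⟩ := Nat.find_spec hex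
  refine ⟨α, hαγ, hαJ, ?_⟩
  intro β hβJ hβα
  have hβγ : β ≤ γ := hβα.trans hαγ
  have h1 : Nat.find hex ≤ ∑ i, β i := Nat.find_le ⟨β, hβJ, hβγ, rfl⟩
  have h2 : ∑ i, β i ≤ ∑ i, α i := Finset.sum_le_sum (fun i _ => hβα i)
  have h3 : ∑ i, β i = ∑ i, α i := le_antisymm h2 (hsum ▸ h1)
  funext i
  exact (Finset.sum_eq_sum_iff_of_le (fun i _ => hβα i)).mp h3 i (Finset.mem_univ i)


set_option maxHeartbeats 1000000 in
/-- Proposition 10.5: for `n ≥ 4`, every power `I^k`, `k ≥ 2`, of a good ideal `I`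
is bad (w.r.t. its own boxes, of sizes `k·d_i`). -/
theorem power_bad_ge_four_vars {K : Type*} [Field K] {n : ℕ} (hn : 4 ≤ n)
    (I : Ideal (MvPolynomial (Fin n) K)) (d : Fin n → ℕ)
    (hI : MPrimaryWithCorners I d) (hgood : IsGood I d) :
    ∀ k : ℕ, 2 ≤ k → ¬ IsGood (I ^ k) (fun i => k * d i) := by
  intro k hk hbad
  obtain ⟨-, -, hd, hcor⟩ := hI
  classical
  have h2 : (2:ℕ) ≤ n := by omega
  set i0 : Fin n := ⟨0, by omega⟩ with hi0
  set i1 : Fin n := ⟨1, by omega⟩ with hi1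
  set i2 : Fin n := ⟨2, by omega⟩ with hi2
  set i3 : Fin n := ⟨3, by omega⟩ with hi3
  set a : Fin n → ℕ := Pi.single i0 3 + Pi.single i1 (k-1) + Pi.single i2 (k-1)
      + Pi.single i3 (k-1) with ha
  have hne01 : i0 ≠ i1 := by simp [hi0, hi1, Fin.ext_iff]
  have hne02 : i0 ≠ i2 := by simp [hi0, hi2, Fin.ext_iff]
  have hne03 : i0 ≠ i3 := by simp [hi0, hi3, Fin.ext_iff]
  have hne12 : i1 ≠ i2 := by simp [hi1, hi2, Fin.ext_iff]
  have hne13 : i1 ≠ i3 := by simp [hi1, hi3, Fin.ext_iff]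
  have hne23 : i2 ≠ i3 := by simp [hi2, hi3, Fin.ext_iff]
  have hsum : ∑ i, a i = k * 3 := by
    simp only [ha, Pi.add_apply, Finset.sum_add_distrib, Finset.sum_pi_single',
      Finset.mem_univ, if_true]
    omega
  have hmem : mono K (fun j => a j * d j) ∈ (I ^ k) ^ 3 := by
    have := mem_pow_sum I d a (fun i => (hcor i).1)
    rwa [hsum, pow_mul] at this
  obtain ⟨α, hαle, hαmin⟩ := exists_minGen_le _ _ hmem
  obtain ⟨b, hbox, hbsum⟩ := hbad 3 (by norm_num) α hαmin
  -- coordinates away from i0 have b i = 0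
  have ha_le : ∀ i, i ≠ i0 → a i ≤ k - 1 := by
    intro i hi
    simp only [ha, Pi.add_apply, Pi.single_apply]
    split_ifs <;> omega
  have hb0 : ∀ i, i ≠ i0 → b i = 0 := by
    intro i hi
    by_contra hbi
    have h1 : b i * (k * d i) ≤ α i := (hbox i).1
    have h2 : α i ≤ a i * d i := hαle i
    have h3 : a i * d i ≤ (k - 1) * d i := Nat.mul_le_mul_right _ (ha_le i hi)
    have h4 : 1 * (k * d i) ≤ b i * (k * d i) :=
      Nat.mul_le_mul_right _ (Nat.pos_of_ne_zero hbi)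
    have h5 : k * d i ≤ (k - 1) * d i := by omega
    have h6 : k ≤ k - 1 := Nat.le_of_mul_le_mul_right h5 (hd i)
    omega
  have hbi0 : b i0 = 2 := by
    have : ∑ i, b i = b i0 :=
      Finset.sum_eq_single i0 (fun i _ hi => hb0 i hi) (by simp)
    omega
  have hai0 : a i0 = 3 := by
    simp [ha, Pi.single_apply, hne01, hne02, hne03, Ne.symm hne01, Ne.symm hne02,
      Ne.symm hne03]
  have h1 : b i0 * (k * d i0) ≤ α i0 := (hbox i0).1
  have h2 : α i0 ≤ 3 * d i0 := by
    have h := hαle i0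
    simp only at h
    rwa [hai0] at h
  have hdi0 := hd i0
  have h7 : 4 * d i0 ≤ 2 * (k * d i0) := by
    calc 4 * d i0 = 2 * (2 * d i0) := by ring
      _ ≤ 2 * (k * d i0) := Nat.mul_le_mul_left 2 (Nat.mul_le_mul_right _ hk)
  have h8 : 4 * d i0 ≤ α i0 := by
    rw [hbi0] at h1
    exact le_trans h7 h1
  omega

end GasanovaRR
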